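/- Let Δ be a d-colorable simplicial complex on vertex set V with proper coloring c: V → {1,...,d} and f-vector γ. For F ∈ Δ, let d(F) be the set of the first |F| integers in {1,...,d} \ c(F). Then Γ = {F ∪ G : F ∈ Δ, G ⊆ {1,...,d} \ (c(F) ∪ d(F))} is a d-colorable simplicial complex with f_i(Γ) = Σ_{j=0}^{i} γ_j · C(d-2j, i-j). -/

import Mathlib

open scoped Classical

private lemma aux_take_lt {l : List ℕ} (hl : l.Pairwise (· < ·)) {n x : ℕ}
    (hx : x ∈ l) (hx' : x ∉ l.take n) : ∀ y ∈ l.take n, y < x := by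
  intro y hy
  rw [← List.take_append_drop n l] at hl hx
  rcases List.mem_append.1 hx with h1 | h2
  · exact absurd h1 hx'
  · exact (List.pairwise_append.1 hl).2.2 y hy x h2

private lemma aux_card_lt {l : List ℕ} (hl : l.Pairwise (· < ·)) (hnd : l.Nodup) {n x : ℕ}
    (hx : x ∈ l.take n) (T : Finset ℕ) (hT : ∀ y ∈ T, y ∈ l ∧ y < x) : T.card < n := by
  have hndt : (l.take n).Nodup := hnd.sublist (List.take_sublist n l)
  have hxt : x ∈ (l.take n).toFinset := List.mem_toFinset.2 hx
  have hTsub : T ⊆ (l.take n).toFinset.erase x := by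
    intro y hy
    obtain ⟨hyl, hylt⟩ := hT y hy
    have hytake : y ∈ l.take n := by
      by_contra hyn
      have := aux_take_lt hl hyl hyn x hx
      omega
    exact Finset.mem_erase.2 ⟨Nat.ne_of_lt hylt, List.mem_toFinset.2 hytake⟩
  have h1 := Finset.card_le_card hTsub
  rw [Finset.card_erase_of_mem hxt] at h1
  have h2 : (l.take n).toFinset.card = (l.take n).length := List.toFinset_card_of_nodup hndt
  have h3 : (l.take n).length ≤ n := by
    rw [List.length_take]; omega
  have h4 : 0 < n := by
    rcases Nat.eq_zero_or_pos n with h | h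
    · subst h; simp at hx
    · exact h
  omega


/-- Let `K` be a `d`-colorable simplicial complex on vertices `α` with proper
coloring `c : α → {1,…,d}` and `f`-vector `γ` (faces of at most `⌊d/2⌋`
vertices). For `F ∈ K`, `dF F` is the set of the first `|F|` integers of
`{1,…,d} \ c(F)`. Then `Γ = {F ∪ G : F ∈ K, G ⊆ {1,…,d} \ (c(F) ∪ dF F)}`
(new vertices `{1,…,d}` colored by themselves, tagged disjointly from `α`)
is a simplicial complex, properly colored by `Sum.elim c id` with colors in
`{1,…,d}`, and `f_i(Γ) = Σ_{j=0}^{i} γ_j · C(d-2j, i-j)`. -/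
theorem stmt19 {α : Type*} [DecidableEq α] (d : ℕ) (K : Finset (Finset α))
    (c : α → ℕ) (γ : ℕ → ℕ)
    (hc : ∀ v : α, c v ∈ Finset.Icc 1 d)
    (hproper : ∀ F ∈ K, ∀ a ∈ F, ∀ b ∈ F, c a = c b → a = b)
    (hdc : ∀ s ∈ K, ∀ t ⊆ s, t ∈ K)
    (hcard : ∀ s ∈ K, 2 * s.card ≤ d)
    (hγ : ∀ j, γ j = (K.filter fun s => s.card = j).card) :
    ∀ dF : Finset α → Finset ℕ,
      (dF = fun F => (((Finset.Icc 1 d \ F.image c).sort (· ≤ ·)).take F.card).toFinset) →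
    ∀ Γ : Finset (Finset (α ⊕ ℕ)),
      Γ = (K.biUnion fun F =>
        ((Finset.Icc 1 d \ (F.image c ∪ dF F)).powerset).image fun G =>
          F.image Sum.inl ∪ G.image Sum.inr) →
      (∀ s ∈ Γ, ∀ t ⊆ s, t ∈ Γ) ∧
      (∀ s ∈ Γ, ∀ x ∈ s, Sum.elim c id x ∈ Finset.Icc 1 d) ∧
      (∀ s ∈ Γ, ∀ a ∈ s, ∀ b ∈ s, Sum.elim c id a = Sum.elim c id b → a = b) ∧
      ∀ i, ((Γ.filter fun s => s.card = i).card) =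
        ∑ j ∈ Finset.range (i + 1), γ j * (d - 2 * j).choose (i - j) := by
  intro dF hdF0 Γ hΓ
  have hdF : ∀ F : Finset α,
      dF F = (((Finset.Icc 1 d \ F.image c).sort (· ≤ ·)).take F.card).toFinset := by
    intro F; rw [hdF0]
  have hIcard : (Finset.Icc 1 d).card = d := by rw [Nat.card_Icc]; omega
  have himg : ∀ F : Finset α, F.image c ⊆ Finset.Icc 1 d := by
    intro F x hx
    obtain ⟨v, _, rfl⟩ := Finset.mem_image.1 hx
    exact hc v
  have himgcard : ∀ F ∈ K, (F.image c).card = F.card := fun F hF =>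
    Finset.card_image_of_injOn (fun a ha b hb h => hproper F hF a ha b hb h)
  have hlen : ∀ F ∈ K, ((Finset.Icc 1 d \ F.image c).sort (· ≤ ·)).length = d - F.card := by
    intro F hF
    rw [Finset.length_sort, Finset.card_sdiff_of_subset (himg F), himgcard F hF, hIcard]
  have hdFsub : ∀ F : Finset α, dF F ⊆ Finset.Icc 1 d \ F.image c := by
    intro F x hx
    rw [hdF] at hx
    exact (Finset.mem_sort _).1 (List.mem_of_mem_take (List.mem_toFinset.1 hx))
  have hdFcard : ∀ F ∈ K, (dF F).card = F.card := by
    intro F hF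
    rw [hdF]
    have hnd : (((Finset.Icc 1 d \ F.image c).sort (· ≤ ·)).take F.card).Nodup :=
      (Finset.sort_nodup _ _).sublist (List.take_sublist _ _)
    rw [List.toFinset_card_of_nodup hnd, List.length_take, hlen F hF]
    have := hcard F hF
    omega
  -- monotonicity: the key combinatorial lemma
  have hkey : ∀ F ∈ K, ∀ F' ⊆ F, F'.image c ∪ dF F' ⊆ F.image c ∪ dF F := by
    intro F hF F' hF' x hx
    rcases Finset.mem_union.1 hx with hx | hx
    · exact Finset.mem_union_left _ (Finset.image_subset_image hF' hx)
    · by_contra hnx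
      rw [Finset.mem_union] at hnx
      push_neg at hnx
      obtain ⟨hnx1, hnx2⟩ := hnx
      rw [hdF] at hx
      replace hx := List.mem_toFinset.1 hx
      have hxIcc : x ∈ Finset.Icc 1 d := by
        have := (Finset.mem_sort (α := ℕ) (· ≤ ·)).1 (List.mem_of_mem_take hx)
        exact (Finset.mem_sdiff.1 this).1
      have hxl : x ∈ (Finset.Icc 1 d \ F.image c).sort (· ≤ ·) :=
        (Finset.mem_sort _).2 (Finset.mem_sdiff.2 ⟨hxIcc, hnx1⟩)
      have hxnt : x ∉ ((Finset.Icc 1 d \ F.image c).sort (· ≤ ·)).take F.card := by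
        intro h
        exact hnx2 (by rw [hdF]; exact List.mem_toFinset.2 h)
      have hTprop : ∀ y ∈ dF F,
          y ∈ (Finset.Icc 1 d \ F'.image c).sort (· ≤ ·) ∧ y < x := by
        intro y hy
        have hysd := Finset.mem_sdiff.1 (hdFsub F hy)
        constructor
        · refine (Finset.mem_sort _).2 (Finset.mem_sdiff.2 ⟨hysd.1, ?_⟩)
          intro hyc'
          exact hysd.2 (Finset.image_subset_image hF' hyc')
        · have hyt : y ∈ ((Finset.Icc 1 d \ F.image c).sort (· ≤ ·)).take F.card := by
            rw [hdF] at hy; exact List.mem_toFinset.1 hy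
          exact aux_take_lt ((Finset.sortedLT_sort _).pairwise) hxl hxnt y hyt
      have hlt := aux_card_lt ((Finset.sortedLT_sort _).pairwise) (Finset.sort_nodup _ _) hx (dF F) hTprop
      rw [hdFcard F hF] at hlt
      have := Finset.card_le_card hF'
      omega
  have hdisjCD : ∀ F : Finset α, Disjoint (F.image c) (dF F) := fun F =>
    Finset.disjoint_left.2 fun x hx1 hx2 => (Finset.mem_sdiff.1 (hdFsub F hx2)).2 hx1
  have hAcard : ∀ F ∈ K, (Finset.Icc 1 d \ (F.image c ∪ dF F)).card = d - 2 * F.card := by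
    intro F hF
    rw [Finset.card_sdiff_of_subset (Finset.union_subset (himg F)
        ((hdFsub F).trans (Finset.sdiff_subset))),
      Finset.card_union_of_disjoint (hdisjCD F), himgcard F hF, hdFcard F hF, hIcard]
    omega
  have hLeft : ∀ (F : Finset α) (G : Finset ℕ),
      (F.image Sum.inl ∪ G.image Sum.inr).toLeft = F := by
    intro F G; ext a; simp
  have hRight : ∀ (F : Finset α) (G : Finset ℕ),
      (F.image Sum.inl ∪ G.image Sum.inr).toRight = G := by
    intro F G; ext b; simp
  have hcardΦ : ∀ (F : Finset α) (G : Finset ℕ),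
      (F.image Sum.inl ∪ G.image Sum.inr : Finset (α ⊕ ℕ)).card = F.card + G.card := by
    intro F G
    rw [Finset.card_union_of_disjoint, Finset.card_image_of_injective _ Sum.inl_injective,
      Finset.card_image_of_injective _ Sum.inr_injective]
    refine Finset.disjoint_left.2 fun x hx1 hx2 => ?_
    obtain ⟨a, _, rfl⟩ := Finset.mem_image.1 hx1
    obtain ⟨b, _, h⟩ := Finset.mem_image.1 hx2
    exact Sum.inr_ne_inl h
  have hdecomp : ∀ u : Finset (α ⊕ ℕ), u = u.toLeft.image Sum.inl ∪ u.toRight.image Sum.inr := by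
    intro u; ext x; cases x <;> simp
  have hmem : ∀ s : Finset (α ⊕ ℕ), s ∈ Γ ↔ ∃ F, F ∈ K ∧ ∃ G,
      G ⊆ Finset.Icc 1 d \ (F.image c ∪ dF F) ∧ s = F.image Sum.inl ∪ G.image Sum.inr := by
    intro s
    rw [hΓ]
    simp only [Finset.mem_biUnion, Finset.mem_image, Finset.mem_powerset]
    constructor
    · rintro ⟨F, hF, G, hG, rfl⟩; exact ⟨F, hF, G, hG, rfl⟩
    · rintro ⟨F, hF, G, hG, rfl⟩; exact ⟨F, hF, G, hG, rfl⟩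
  refine ⟨?_, ?_, ?_, ?_⟩
  · -- downward closed
    intro s hs t hts
    obtain ⟨F, hF, G, hG, rfl⟩ := (hmem s).1 hs
    have htL : t.toLeft ⊆ F := by
      have := Finset.toLeft_subset_toLeft hts
      rwa [hLeft] at this
    have htR : t.toRight ⊆ G := by
      have := Finset.toRight_subset_toRight hts
      rwa [hRight] at this
    refine (hmem t).2 ⟨t.toLeft, hdc F hF _ htL, t.toRight, ?_, hdecomp t⟩
    refine htR.trans (hG.trans ?_)
    exact Finset.sdiff_subset_sdiff (Finset.Subset.refl _) (hkey F hF _ htL)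
  · -- colors in Icc
    intro s hs x hx
    obtain ⟨F, hF, G, hG, rfl⟩ := (hmem s).1 hs
    rcases Finset.mem_union.1 hx with hx | hx
    · obtain ⟨a, _, rfl⟩ := Finset.mem_image.1 hx
      simpa using hc a
    · obtain ⟨n, hn, rfl⟩ := Finset.mem_image.1 hx
      have := (Finset.mem_sdiff.1 (hG hn)).1
      simpa using this
  · -- proper coloring
    intro s hs a ha b hb hab
    obtain ⟨F, hF, G, hG, rfl⟩ := (hmem s).1 hs
    have hmemF : ∀ z : α, Sum.inl z ∈ F.image Sum.inl ∪ G.image Sum.inr → z ∈ F := by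
      intro z hz
      rcases Finset.mem_union.1 hz with hz | hz
      · obtain ⟨w, hw, hwe⟩ := Finset.mem_image.1 hz
        cases hwe; exact hw
      · obtain ⟨w, _, hwe⟩ := Finset.mem_image.1 hz
        exact absurd hwe (by simp)
    have hmemG : ∀ n : ℕ, Sum.inr n ∈ F.image Sum.inl ∪ G.image Sum.inr → n ∈ G := by
      intro n hn
      rcases Finset.mem_union.1 hn with hn | hn
      · obtain ⟨w, _, hwe⟩ := Finset.mem_image.1 hn
        exact absurd hwe (by simp)
      · obtain ⟨w, hw, hwe⟩ := Finset.mem_image.1 hn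
        cases hwe; exact hw
    have hGnotc : ∀ n ∈ G, ∀ z ∈ F, c z ≠ n := by
      intro n hn z hz he
      have := (Finset.mem_sdiff.1 (hG hn)).2
      exact this (Finset.mem_union_left _ (Finset.mem_image.2 ⟨z, hz, he⟩))
    cases a with
    | inl a =>
      cases b with
      | inl b =>
        simp only [Sum.elim_inl] at hab
        exact congrArg Sum.inl (hproper F hF a (hmemF a ha) b (hmemF b hb) hab)
      | inr n =>
        simp only [Sum.elim_inl, Sum.elim_inr, id] at hab
        exact absurd hab (hGnotc n (hmemG n hb) a (hmemF a ha))
    | inr n =>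
      cases b with
      | inl b =>
        simp only [Sum.elim_inl, Sum.elim_inr, id] at hab
        exact absurd hab.symm (hGnotc n (hmemG n ha) b (hmemF b hb))
      | inr m =>
        simp only [Sum.elim_inr, id] at hab
        exact congrArg Sum.inr hab
  · -- counting
    intro i
    have hΓi : Γ.filter (fun s => s.card = i) =
        (K.filter fun F => F.card ∈ Finset.range (i + 1)).biUnion
          (fun F => ((Finset.Icc 1 d \ (F.image c ∪ dF F)).powersetCard (i - F.card)).image
            (fun G => F.image Sum.inl ∪ G.image Sum.inr)) := by
      ext s
      simp only [Finset.mem_filter, Finset.mem_biUnion, Finset.mem_image,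
        Finset.mem_powersetCard, Finset.mem_range]
      constructor
      · rintro ⟨hs, hcardi⟩
        obtain ⟨F, hF, G, hG, rfl⟩ := (hmem _).1 hs
        rw [hcardΦ] at hcardi
        exact ⟨F, ⟨hF, by omega⟩, G, ⟨hG, by omega⟩, rfl⟩
      · rintro ⟨F, ⟨hF, hFi⟩, G, ⟨hG, hGcard⟩, rfl⟩
        exact ⟨(hmem _).2 ⟨F, hF, G, hG, rfl⟩, by rw [hcardΦ]; omega⟩
    have hpw : ∀ F₁ ∈ (K.filter fun F => F.card ∈ Finset.range (i + 1)),
        ∀ F₂ ∈ (K.filter fun F => F.card ∈ Finset.range (i + 1)), F₁ ≠ F₂ →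
        Disjoint
          (((Finset.Icc 1 d \ (F₁.image c ∪ dF F₁)).powersetCard (i - F₁.card)).image
            (fun G => F₁.image Sum.inl ∪ G.image Sum.inr))
          (((Finset.Icc 1 d \ (F₂.image c ∪ dF F₂)).powersetCard (i - F₂.card)).image
            (fun G => F₂.image Sum.inl ∪ G.image Sum.inr)) := by
      intro F₁ _ F₂ _ hne
      refine Finset.disjoint_left.2 fun s hs1 hs2 => ?_
      obtain ⟨G₁, _, rfl⟩ := Finset.mem_image.1 hs1
      obtain ⟨G₂, _, he⟩ := Finset.mem_image.1 hs2
      apply hne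
      have := congrArg Finset.toLeft he
      rw [hLeft, hLeft] at this
      exact this.symm
    rw [hΓi, Finset.card_biUnion hpw]
    have hcardim : ∀ F ∈ (K.filter fun F => F.card ∈ Finset.range (i + 1)),
        (((Finset.Icc 1 d \ (F.image c ∪ dF F)).powersetCard (i - F.card)).image
          (fun G => F.image Sum.inl ∪ G.image Sum.inr)).card =
        (d - 2 * F.card).choose (i - F.card) := by
      intro F hF
      rw [Finset.card_image_of_injOn, Finset.card_powersetCard,
        hAcard F (Finset.mem_filter.1 hF).1]
      intro G₁ _ G₂ _ he
      have := congrArg Finset.toRight he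
      rwa [hRight, hRight] at this
    rw [Finset.sum_congr rfl hcardim,
      ← Finset.sum_fiberwise_eq_sum_filter K (Finset.range (i + 1)) Finset.card
        (fun F => (d - 2 * F.card).choose (i - F.card))]
    refine Finset.sum_congr rfl fun j _ => ?_
    rw [hγ j,
      Finset.sum_congr rfl (fun F hF => by rw [(Finset.mem_filter.1 hF).2]),
      Finset.sum_const, smul_eq_mul]
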